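/- Let p ≥ 5 be prime and set m = floor((p-2)/3). Then the rational number sum_{k=0}^{m} (3k+1)!/(k! * k! * (k+1)!) * 3^(-3k)/(k+2) is congruent to 0 modulo p in the ring of p-integral rationals. -/

import Mathlib

/-- Congruence of rationals: x ≡ y mod p^k in the p-integral rationals ℤ_(p). -/
def RatModCong (p k : ℕ) (x y : ℚ) : Prop :=
  ∃ a b : ℤ, ¬ (p : ℤ) ∣ b ∧ (x - y) * b = (p : ℚ) ^ k * a

lemma closed_form (m : ℕ) :
    (∑ k ∈ Finset.range (m + 1),
        ((3 * k + 1).factorial : ℚ) /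
          ((k.factorial : ℚ) * (k.factorial : ℚ) * ((k + 1).factorial : ℚ)) /
          (3 : ℚ) ^ (3 * k) / (k + 2))
      = ((3 * m + 4).factorial : ℚ) /
        (24 * (m.factorial : ℚ) * ((m + 1).factorial : ℚ) * ((m + 2).factorial : ℚ) *
          (3 : ℚ) ^ (3 * m)) := by
  induction m with
  | zero => simp [Nat.factorial]; norm_num
  | succ n ih =>
      rw [Finset.sum_range_succ, ih]
      have e1 : ((3 * (n + 1) + 4).factorial : ℚ)
          = (3 * n + 7) * ((3 * n + 6) * ((3 * n + 5) * ((3 * n + 4).factorial : ℚ))) := by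
        rw [show 3 * (n + 1) + 4 = (3 * n + 4) + 1 + 1 + 1 by ring,
          Nat.factorial_succ, Nat.factorial_succ, Nat.factorial_succ]
        push_cast; ring
      have e2 : ((3 * (n + 1) + 1).factorial : ℚ) = ((3 * n + 4).factorial : ℚ) := by
        rw [show 3 * (n + 1) + 1 = 3 * n + 4 by ring]
      have e3 : ((n + 1 + 1).factorial : ℚ) = (n + 2) * ((n + 1).factorial : ℚ) := by
        rw [show n + 1 + 1 = (n + 1) + 1 by ring, Nat.factorial_succ]; push_cast; ring
      have e4 : ((n + 1 + 2).factorial : ℚ)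
          = (n + 3) * ((n + 2) * ((n + 1).factorial : ℚ)) := by
        rw [show n + 1 + 2 = (n + 1) + 1 + 1 by ring, Nat.factorial_succ, Nat.factorial_succ]
        push_cast; ring
      have e5 : ((n + 2).factorial : ℚ) = (n + 2) * ((n + 1).factorial : ℚ) := by
        rw [Nat.factorial_succ]; push_cast; ring
      have e6 : ((n + 1).factorial : ℚ) = (n + 1) * (n.factorial : ℚ) := by
        rw [Nat.factorial_succ]; push_cast; ring
      have e7 : (3 : ℚ) ^ (3 * (n + 1)) = 27 * (3 : ℚ) ^ (3 * n) := by
        rw [show 3 * (n + 1) = 3 * n + 3 by ring, pow_add]; ring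
      rw [e1, e2, e3, e4, e6, e7]
      have hf : (n.factorial : ℚ) ≠ 0 := Nat.cast_ne_zero.mpr n.factorial_ne_zero
      have h3 : (3 : ℚ) ^ (3 * n) ≠ 0 := by positivity
      have h1 : (n : ℚ) + 1 ≠ 0 := by positivity
      have h2 : (n : ℚ) + 2 ≠ 0 := by positivity
      have h4 : (n : ℚ) + 3 ≠ 0 := by positivity
      have h5 : ((n : ℚ) + 1) + 2 ≠ 0 := by positivity
      field_simp
      push_cast; ring

/-- For a prime p ≥ 5 with m = ⌊(p-2)/3⌋, the sum
∑_{k=0}^m (3k+1)!/(k! k! (k+1)!) 3^(-3k)/(k+2) is ≡ 0 mod p as a p-integral rational. -/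
theorem sum_g_cong_zero (p : ℕ) (hp : p.Prime) (hp5 : 5 ≤ p) :
    RatModCong p 1
      (∑ k ∈ Finset.range ((p - 2) / 3 + 1),
        ((3 * k + 1).factorial : ℚ) /
          ((k.factorial : ℚ) * (k.factorial : ℚ) * ((k + 1).factorial : ℚ)) /
          (3 : ℚ) ^ (3 * k) / (k + 2))
      0 := by
  set m := (p - 2) / 3 with hm
  have hmod : (p - 2) % 3 < 3 := Nat.mod_lt _ (by norm_num)
  have heq : 3 * m + (p - 2) % 3 = p - 2 := by rw [hm]; exact Nat.div_add_mod (p - 2) 3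
  have hm2p : m + 2 < p := by
    have h1 : m < p - 2 := Nat.div_lt_self (by omega) (by norm_num)
    omega
  have hple : p ≤ 3 * m + 4 := by omega
  obtain ⟨c, hc⟩ := Nat.dvd_factorial hp.pos hple
  refine ⟨(c : ℤ),
    ((24 * m.factorial * (m + 1).factorial * (m + 2).factorial * 3 ^ (3 * m) : ℕ) : ℤ),
    ?_, ?_⟩
  · intro h
    have h' : p ∣ 24 * m.factorial * (m + 1).factorial * (m + 2).factorial * 3 ^ (3 * m) := by
      exact_mod_cast h
    rcases (Nat.Prime.dvd_mul hp).mp h' with h' | h'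
    · rcases (Nat.Prime.dvd_mul hp).mp h' with h' | h'
      · rcases (Nat.Prime.dvd_mul hp).mp h' with h' | h'
        · rcases (Nat.Prime.dvd_mul hp).mp h' with h' | h'
          · rw [show (24:ℕ) = 2^3 * 3 by norm_num] at h'
            rcases (Nat.Prime.dvd_mul hp).mp h' with h'' | h''
            · have := Nat.le_of_dvd (by norm_num) (hp.dvd_of_dvd_pow h''); omega
            · have := Nat.le_of_dvd (by norm_num) h''; omega
          · have := (Nat.Prime.dvd_factorial hp).mp h'; omega
        · have := (Nat.Prime.dvd_factorial hp).mp h'; omega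
      · have := (Nat.Prime.dvd_factorial hp).mp h'; omega
    · have h3 : p ∣ 3 := hp.dvd_of_dvd_pow h'
      have := Nat.le_of_dvd (by norm_num) h3; omega
  · rw [closed_form m, sub_zero]
    have hD : (24 * (m.factorial : ℚ) * ((m + 1).factorial : ℚ) * ((m + 2).factorial : ℚ) *
        (3 : ℚ) ^ (3 * m)) ≠ 0 := by
      have h1 : (m.factorial : ℚ) ≠ 0 := Nat.cast_ne_zero.mpr m.factorial_ne_zero
      have h2 : ((m + 1).factorial : ℚ) ≠ 0 := Nat.cast_ne_zero.mpr (m + 1).factorial_ne_zero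
      have h3 : ((m + 2).factorial : ℚ) ≠ 0 := Nat.cast_ne_zero.mpr (m + 2).factorial_ne_zero
      positivity
    push_cast
    rw [div_mul_cancel₀ _ hD, pow_one]
    exact_mod_cast congrArg (Nat.cast : ℕ → ℚ) hc
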